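/- Let R be a commutative algebra over a field k of characteristic zero, F a free R-module of odd rank n = 2m+1 ≥ 3 with basis e_1,...,e_n and dual basis e^1,...,e^n of F*. Let φ = Σ_{i<j} x_{ij} e_i ∧ e_j ∈ Λ²F. Define f : F* → F by f(a*) = a* ⌟ φ and g : F → Λ^n F by g(b) = b ∧ (Λ^m φ). Then g ∘ f = 0. -/

import Mathlib

open ExteriorAlgebra


lemma prod_iota_zero {R F : Type*} [CommRing R] [AddCommGroup F] [Module R F]
    {N : ℕ} (e : Module.Basis (Fin N) R F) {t : ℕ} (ht : N < t) (v : Fin t → Fin N) :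
    (List.ofFn fun s => ι R (e (v s))).prod = 0 := by
  rw [← ιMulti_apply]
  apply AlternatingMap.map_eq_zero_of_not_injective
  intro hinj
  have hv : Function.Injective v := fun p q hpq => hinj (by simp [hpq])
  have := Fintype.card_le_of_injective v hv
  simp at this
  omega

lemma pow_mem_span {R F : Type*} [CommRing R] [AddCommGroup F] [Module R F]
    {N : ℕ} (e : Module.Basis (Fin N) R F) (c : Fin N → Fin N → R)
    (φ : ExteriorAlgebra R F)
    (hφ : φ = ∑ i : Fin N, ∑ j : Fin N, c i j • (ι R (e i) * ι R (e j)))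
    (t : ℕ) :
    φ ^ t ∈ Submodule.span R
      {z : ExteriorAlgebra R F | ∃ v : Fin (2 * t) → Fin N,
        z = (List.ofFn fun s => ι R (e (v s))).prod} := by
  induction t with
  | zero =>
      apply Submodule.subset_span
      exact ⟨Fin.elim0, by simp⟩
  | succ t ih =>
      rw [pow_succ']
      have key : ∀ z ∈ Submodule.span R
          {z : ExteriorAlgebra R F | ∃ v : Fin (2 * t) → Fin N,
            z = (List.ofFn fun s => ι R (e (v s))).prod},
          φ * z ∈ Submodule.span R
          {z : ExteriorAlgebra R F | ∃ v : Fin (2 * (t+1)) → Fin N,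
            z = (List.ofFn fun s => ι R (e (v s))).prod} := by
        intro z hz
        induction hz using Submodule.span_induction with
        | mem z hz =>
            obtain ⟨w, rfl⟩ := hz
            rw [hφ, Finset.sum_mul]
            apply Submodule.sum_mem
            intro i _
            rw [Finset.sum_mul]
            apply Submodule.sum_mem
            intro j _
            rw [smul_mul_assoc]
            apply Submodule.smul_mem
            apply Submodule.subset_span
            refine ⟨Fin.cons i (Fin.cons j w), ?_⟩
            simp [List.ofFn_succ, mul_assoc]
        | zero => simp
        | add y z _ _ hy hz => simpa [mul_add] using Submodule.add_mem _ hy hz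
        | smul r y _ hy => simpa [mul_smul_comm] using Submodule.smul_mem _ r hy
      exact key _ ih

set_option maxHeartbeats 1600000 in
/-- Part of Lemma 2.4 (Buchsbaum–Eisenbud): let `R` be a commutative algebra
over a field `k` of characteristic zero, `F` a free `R`-module of odd rank
`n = 2m+1 ≥ 3` with basis `e_1, …, e_n`, and `φ = Σ_{i<j} x_{ij} e_i ∧ e_j ∈ Λ²F`.
Let `f(a*) = a* ⌟ φ` (interior multiplication, so
`f(a*) = Σ_{i<j} x_{ij} (⟨a*,e_i⟩ e_j − ⟨a*,e_j⟩ e_i)`) and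
`g(b) = b ∧ (Λ^m φ)`.  Then `g ∘ f = 0`, i.e. `f(a*) ∧ φ^m = 0` for every
`a* ∈ F*`. -/
theorem stmt_4 {k R F : Type*} [Field k] [CharZero k] [CommRing R] [Algebra k R]
    [AddCommGroup F] [Module R F]
    (m : ℕ) (hm : 1 ≤ m) (e : Module.Basis (Fin (2 * m + 1)) R F)
    (x : Fin (2 * m + 1) → Fin (2 * m + 1) → R) (a : Module.Dual R F)
    (φ : ExteriorAlgebra R F)
    (hφ : φ = ∑ i : Fin (2 * m + 1), ∑ j : Fin (2 * m + 1),
        if i < j then x i j • (ι R (e i) * ι R (e j)) else 0)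
    (fa : F)
    (hfa : fa = ∑ i : Fin (2 * m + 1), ∑ j : Fin (2 * m + 1),
        if i < j then x i j • (a (e i) • e j - a (e j) • e i) else 0) :
    ι R fa * φ ^ m = 0 := by
  classical
  set c : Fin (2*m+1) → Fin (2*m+1) → R := fun i j => if i < j then x i j else 0 with hc
  have hφ' : φ = ∑ i, ∑ j, c i j • (ι R (e i) * ι R (e j)) := by
    rw [hφ]
    refine Finset.sum_congr rfl fun i _ => Finset.sum_congr rfl fun j _ => ?_
    by_cases h : i < j <;> simp [hc, h]
  -- φ ^ (m+1) = 0
  have hpow : φ ^ (m+1) = 0 := by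
    have h1 := pow_mem_span e c φ hφ' (m+1)
    have h2 : Submodule.span R {z : ExteriorAlgebra R F |
        ∃ v : Fin (2*(m+1)) → Fin (2*m+1),
          z = (List.ofFn fun s => ι R (e (v s))).prod} ≤ ⊥ := by
      rw [Submodule.span_le]
      rintro z ⟨v, rfl⟩
      exact prod_iota_zero e (by omega) v
    simpa using h2 h1
  -- the contraction operator
  set d : ExteriorAlgebra R F →ₗ[R] ExteriorAlgebra R F :=
    CliffordAlgebra.contractLeft (Q := (0 : QuadraticForm R F)) a with hd
  have hd_mul : ∀ (u : F) (b : ExteriorAlgebra R F),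
      d (ι R u * b) = a u • b - ι R u * d b := fun u b =>
    CliffordAlgebra.contractLeft_ι_mul (d := a) u b
  have hιfa : ι R fa = ∑ i, ∑ j, c i j • (a (e i) • ι R (e j) - a (e j) • ι R (e i)) := by
    rw [hfa, map_sum]
    refine Finset.sum_congr rfl fun i _ => ?_
    rw [map_sum]
    refine Finset.sum_congr rfl fun j _ => ?_
    by_cases h : i < j <;> simp [hc, h]
  -- derivation rule
  have hder : ∀ y, d (φ * y) = ι R fa * y + φ * d y := by
    intro y
    rw [hφ', Finset.sum_mul, map_sum, hιfa, Finset.sum_mul, Finset.sum_mul,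
      ← Finset.sum_add_distrib]
    refine Finset.sum_congr rfl fun i _ => ?_
    rw [Finset.sum_mul, map_sum, Finset.sum_mul, Finset.sum_mul, ← Finset.sum_add_distrib]
    refine Finset.sum_congr rfl fun j _ => ?_
    rw [smul_mul_assoc, map_smul, mul_assoc, hd_mul, hd_mul]
    simp only [smul_sub, mul_sub, sub_mul, smul_mul_assoc, mul_smul_comm, mul_assoc, smul_smul]
    abel
  have hdφ : d φ = ι R fa := by
    have h1 : d 1 = 0 := CliffordAlgebra.contractLeft_one _ a
    have := hder 1
    simpa [h1] using this
  -- centrality of φ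
  have swap : ∀ u v : F, ι R u * ι R v = -(ι R v * ι R u) := fun u v =>
    eq_neg_of_add_eq_zero_left (ι_add_mul_swap u v)
  have hcomm : φ * ι R fa = ι R fa * φ := by
    rw [hφ', Finset.sum_mul, Finset.mul_sum]
    refine Finset.sum_congr rfl fun i _ => ?_
    rw [Finset.sum_mul, Finset.mul_sum]
    refine Finset.sum_congr rfl fun j _ => ?_
    rw [smul_mul_assoc, mul_smul_comm]
    congr 1
    rw [mul_assoc, swap (e j) fa, mul_neg, ← mul_assoc, swap (e i) fa, neg_mul, neg_neg,
      mul_assoc]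
  -- the key induction
  have hind : ∀ t : ℕ, d (φ ^ (t+1)) = (t+1) • (ι R fa * φ ^ t) := by
    intro t
    induction t with
    | zero => simpa using hdφ
    | succ t ih =>
        rw [pow_succ', hder, ih, mul_smul_comm,
          show φ * (ι R fa * φ ^ t) = ι R fa * φ ^ (t+1) by
            rw [← mul_assoc, hcomm, mul_assoc, ← pow_succ'],
          succ_nsmul (ι R fa * φ ^ (t+1)) (t+1)]
        exact add_comm _ _
  have h0 : (m+1 : ℕ) • (ι R fa * φ ^ m) = 0 := by
    rw [← hind m, hpow, map_zero]
  have h0' : ((m+1 : ℕ) : R) • (ι R fa * φ ^ m) = 0 := by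
    rwa [Nat.cast_smul_eq_nsmul]
  have hunit : (algebraMap k R) (((m+1 : ℕ) : k))⁻¹ * ((m+1:ℕ) : R) = 1 := by
    rw [show ((m+1:ℕ):R) = algebraMap k R ((m+1:ℕ):k) from (map_natCast _ _).symm, ← map_mul,
      inv_mul_cancel₀ (Nat.cast_ne_zero.2 (Nat.succ_ne_zero m)), map_one]
  calc ι R fa * φ ^ m
      = ((algebraMap k R) (((m+1:ℕ):k))⁻¹ * ((m+1:ℕ):R)) • (ι R fa * φ ^ m) := by
        rw [hunit, one_smul]
    _ = (algebraMap k R) (((m+1:ℕ):k))⁻¹ • (((m+1:ℕ):R) • (ι R fa * φ ^ m)) :=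
        mul_smul _ _ _
    _ = 0 := by rw [h0', smul_zero]
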